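/- arXiv:1203.5584 — 2 statements merged into one kernel-verified Lean document; each statement's English description precedes it below -/
import Mathlib

section
/- Let R be a commutative ring in which 2 is invertible and let S = R[c_1,...,c_i,c_1',...,c_i'] be a polynomial ring in 2i variables. Let φ: S → S be the R-algebra involution exchanging c_j and c_j' for all j. If f ∈ S satisfies f + φ(f) = 0, then f can be written as a sum f = Σ_{j=1}^i (c_j - c_j')·f_j where each f_j satisfies φ(f_j) = f_j. -/
open MvPolynomial

private lemma sub_psi_mem (R : Type*) [CommRing R] (i : ℕ)
    (p : MvPolynomial (Fin i ⊕ Fin i) R) :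
    p - aeval (R := R) (fun v => X (Sum.inl (Sum.elim id id v)) :
        Fin i ⊕ Fin i → MvPolynomial (Fin i ⊕ Fin i) R) p ∈
      Ideal.span (Set.range fun j : Fin i =>
        (X (Sum.inl j) - X (Sum.inr j) : MvPolynomial (Fin i ⊕ Fin i) R)) := by
  set ψ := (aeval (R := R) (fun v => X (Sum.inl (Sum.elim id id v)) :
      Fin i ⊕ Fin i → MvPolynomial (Fin i ⊕ Fin i) R))
  induction p using MvPolynomial.induction_on with
  | C a => simp [ψ]
  | add p q hp hq =>
      have : p + q - ψ (p + q) = (p - ψ p) + (q - ψ q) := by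
        rw [map_add]; ring
      rw [this]; exact Ideal.add_mem _ hp hq
  | mul_X p v hp =>
      have : p * X v - ψ (p * X v) = (p - ψ p) * X v + ψ p * (X v - ψ (X v)) := by
        rw [map_mul]; ring
      rw [this]
      refine Ideal.add_mem _ (Ideal.mul_mem_right _ _ hp) (Ideal.mul_mem_left _ _ ?_)
      cases v with
      | inl j => simp [ψ]
      | inr j =>
          have : (X (Sum.inr j) - ψ (X (Sum.inr j)) :
              MvPolynomial (Fin i ⊕ Fin i) R) =
              -(X (Sum.inl j) - X (Sum.inr j)) := by
            simp [ψ]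
          rw [this]
          exact neg_mem (Ideal.subset_span ⟨j, rfl⟩)

theorem antisymmetric_poly_in_difference_ideal
    (R : Type*) [CommRing R] [Invertible (2 : R)] (i : ℕ)
    (φ : MvPolynomial (Fin i ⊕ Fin i) R →ₐ[R] MvPolynomial (Fin i ⊕ Fin i) R)
    (hφ : φ = rename (Sum.swap : Fin i ⊕ Fin i → Fin i ⊕ Fin i))
    (f : MvPolynomial (Fin i ⊕ Fin i) R)
    (hf : f + φ f = 0) :
    ∃ g : Fin i → MvPolynomial (Fin i ⊕ Fin i) R,
      (∀ j, φ (g j) = g j) ∧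
      f = ∑ j : Fin i, (X (Sum.inl j) - X (Sum.inr j)) * g j := by
  set ψ := (aeval (R := R) (fun v => X (Sum.inl (Sum.elim id id v)) :
      Fin i ⊕ Fin i → MvPolynomial (Fin i ⊕ Fin i) R)) with hψdef
  have hφφ : ∀ p : MvPolynomial (Fin i ⊕ Fin i) R, φ (φ p) = p := by
    intro p
    rw [hφ, rename_rename]
    have : (Sum.swap ∘ Sum.swap : Fin i ⊕ Fin i → Fin i ⊕ Fin i) = id := by
      funext v; cases v <;> rfl
    rw [this, rename_id, AlgHom.id_apply]
  have hψφ : ψ (φ f) = ψ f := by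
    rw [hφ, hψdef, aeval_rename]
    have he : ((fun v => X (Sum.inl (Sum.elim id id v)) :
        Fin i ⊕ Fin i → MvPolynomial (Fin i ⊕ Fin i) R) ∘ Sum.swap) =
        (fun v => X (Sum.inl (Sum.elim id id v))) := by
      funext v; cases v <;> rfl
    rw [he]
  have hψf : ψ f = 0 := by
    have h2 : ψ f + ψ f = 0 := by
      have h := congrArg ψ hf
      rw [map_add, hψφ, map_zero] at h
      exact h
    have h2' : (2 : R) • ψ f = 0 := by
      rw [two_smul]; exact h2
    have h3 := congrArg (fun x => (⅟(2:R)) • x) h2'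
    simpa [smul_smul] using h3
  have hmem : f ∈ Ideal.span (Set.range fun j : Fin i =>
      (X (Sum.inl j) - X (Sum.inr j) : MvPolynomial (Fin i ⊕ Fin i) R)) := by
    have h := sub_psi_mem R i f
    rwa [← hψdef, hψf, sub_zero] at h
  rw [Ideal.span, Submodule.mem_span_range_iff_exists_fun] at hmem
  obtain ⟨c, hc⟩ := hmem
  have hφd : ∀ j : Fin i, φ (X (Sum.inl j) - X (Sum.inr j) :
      MvPolynomial (Fin i ⊕ Fin i) R) = -(X (Sum.inl j) - X (Sum.inr j)) := by
    intro j
    rw [hφ]; simp [rename_X]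
  refine ⟨fun j => (⅟(2:R)) • (c j + φ (c j)), fun j => ?_, ?_⟩
  · rw [map_smul, map_add, hφφ, add_comm]
  · have hφf : φ f = -f := by linear_combination hf
    have key : ∑ j : Fin i, (X (Sum.inl j) - X (Sum.inr j) :
        MvPolynomial (Fin i ⊕ Fin i) R) * φ (c j) = f := by
      have h := congrArg φ hc
      rw [map_sum] at h
      have e : ∀ j : Fin i, φ (c j • (X (Sum.inl j) - X (Sum.inr j) :
          MvPolynomial (Fin i ⊕ Fin i) R)) =
          -((X (Sum.inl j) - X (Sum.inr j)) * φ (c j)) := by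
        intro j
        rw [smul_eq_mul, map_mul, hφd]; ring
      rw [Finset.sum_congr rfl (fun j _ => e j), hφf] at h
      have h' := congrArg Neg.neg h
      rw [neg_neg, ← Finset.sum_neg_distrib] at h'
      simpa using h'
    calc f = (⅟(2:R)) • (f + f) := by
            rw [← two_smul R f, smul_smul, invOf_mul_self, one_smul]
         _ = ∑ j : Fin i, (X (Sum.inl j) - X (Sum.inr j)) *
              ((⅟(2:R)) • (c j + φ (c j))) := by
            nth_rewrite 1 [← hc]
            nth_rewrite 1 [← key]
            rw [← Finset.sum_add_distrib, Finset.smul_sum]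
            refine Finset.sum_congr rfl fun j _ => ?_
            rw [smul_eq_mul, smul_add, smul_add, mul_add, mul_smul_comm,
              mul_smul_comm]
            congr 2
            rw [mul_comm]
end

section
/- Let q(z) ∈ Z[z] be a monic polynomial. Then for infinitely many primes p, the reduction of q modulo p splits into linear factors over Z/p. -/
open Polynomial IntermediateField

private lemma comp_scaleRoots' {R : Type*} [CommRing R] (P : R[X]) (u : R) :
    (P.scaleRoots u).comp (C u * X) = C (u ^ P.natDegree) * P := by
  have h := Polynomial.scaleRoots_eval₂_mul (C : R →+* R[X]) (X : R[X]) u (p := P)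
  calc (P.scaleRoots u).comp (C u * X) = eval₂ C (C u * X) (P.scaleRoots u) := rfl
    _ = C u ^ P.natDegree * eval₂ C X P := h
    _ = C (u ^ P.natDegree) * P := by rw [Polynomial.eval₂_C_X, Polynomial.C_pow]

private lemma comp_CX_injective {F : Type*} [Field F] {u : F} (hu : u ≠ 0) :
    Function.Injective fun P : F[X] => P.comp (C u * X) := by
  intro a b hab
  have h2 := congrArg (fun P : F[X] => P.comp (C u⁻¹ * X)) hab
  simp only [Polynomial.comp_assoc] at h2
  have h3 : (C u * X).comp (C u⁻¹ * X) = (X : F[X]) := by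
    rw [Polynomial.mul_comp, Polynomial.C_comp, Polynomial.X_comp, ← mul_assoc,
      ← Polynomial.C_mul, mul_inv_cancel₀ hu, map_one, one_mul]
  rw [h3] at h2
  simpa using h2

private lemma card_natDegree {F : Type*} [Field F] (s : Multiset F) :
    ((s.map fun a => X - C a).prod).natDegree = Multiset.card s := by
  rw [Polynomial.natDegree_multiset_prod_of_monic]
  · simp [Multiset.map_map, Function.comp_def]
  · intro f hf
    obtain ⟨a, _, rfl⟩ := Multiset.mem_map.mp hf
    exact Polynomial.monic_X_sub_C a

private lemma scaleRoots_multiset_prod {F : Type*} [Field F] {u : F} (hu : u ≠ 0)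
    (s : Multiset F) :
    ((s.map fun a => X - C a).prod).scaleRoots u = (s.map fun a => X - C (u * a)).prod := by
  apply comp_CX_injective hu
  simp only []
  rw [comp_scaleRoots', Polynomial.multiset_prod_comp, Multiset.map_map]
  have h1 : ∀ a : F, ((fun a => X - C (u * a)) a).comp (C u * X) = C u * (X - C a) := by
    intro a
    simp [Polynomial.sub_comp, Polynomial.mul_comp, Polynomial.C_mul, mul_sub]
  calc _
      = (s.map fun _ => C u).prod * (s.map fun a => X - C a).prod := by
        rw [Multiset.map_const', Multiset.prod_replicate, card_natDegree, ← Polynomial.C_pow]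
    _ = (s.map fun a => C u * (X - C a)).prod := by
        rw [← Multiset.prod_map_mul]
    _ = (Multiset.map ((fun p : F[X] => p.comp (C u * X)) ∘ fun a => X - C (u * a)) s).prod := by
        apply congrArg
        apply Multiset.map_congr rfl
        intro a _
        simp only [Function.comp_apply, h1]

private lemma scaleRoots_inj {F : Type*} [Field F] {u : F} (hu : u ≠ 0) :
    Function.Injective fun P : F[X] => P.scaleRoots u := by
  intro a b hab
  simp only [] at hab
  have hdeg : a.natDegree = b.natDegree := by
    have := congrArg Polynomial.natDegree hab
    simpa [Polynomial.natDegree_scaleRoots] using this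
  ext i
  have := congrArg (fun P : F[X] => P.coeff i) hab
  simp only [Polynomial.coeff_scaleRoots, hdeg] at this
  exact mul_right_cancel₀ (pow_ne_zero _ hu) this

private lemma eq_prod_of_scaleRoots {F : Type*} [Field F] {u : F} (hu : u ≠ 0) {P : F[X]}
    {s : Multiset F} (h : P.scaleRoots u = (s.map fun a => X - C a).prod) :
    P = ((s.map fun a => u⁻¹ * a).map fun a => X - C a).prod := by
  apply scaleRoots_inj hu
  simp only []
  rw [h, scaleRoots_multiset_prod hu, Multiset.map_map]
  apply congrArg
  apply Multiset.map_congr rfl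
  intro a _
  show X - C a = X - C (u * (u⁻¹ * a))
  rw [mul_inv_cancel_left₀ hu]

private lemma root_mod_of_dvd {f : ℤ[X]} {p : ℕ} {n : ℤ} (h : (p : ℤ) ∣ f.eval n) :
    ∃ t : ZMod p, (f.map (Int.castRingHom (ZMod p))).eval t = 0 := by
  refine ⟨(n : ZMod p), ?_⟩
  have h2 : ((f.eval n : ℤ) : ZMod p) = 0 := (ZMod.intCast_zmod_eq_zero_iff_dvd _ p).mpr h
  have h3 := Polynomial.eval_intCast_map (Int.castRingHom (ZMod p)) f n
  rw [h3, eq_intCast]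
  exact_mod_cast h2

/-- Schur: a nonconstant integer polynomial has a root modulo infinitely many primes. -/
private lemma schur (f : ℤ[X]) (hf : 0 < f.natDegree) :
    {p : ℕ | p.Prime ∧ ∃ t : ZMod p, (f.map (Int.castRingHom (ZMod p))).eval t = 0}.Infinite := by
  set c : ℤ := f.eval 0 with hc
  by_cases hc0 : c = 0
  · refine Nat.infinite_setOf_prime.mono ?_
    intro p hp
    exact ⟨hp, root_mod_of_dvd (n := 0) (by simp [← hc, hc0])⟩
  · by_contra hfin
    rw [Set.not_infinite] at hfin
    set S := hfin.toFinset with hS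
    set N : ℤ := ∏ p ∈ S, (p : ℤ) with hN
    have hN0 : N ≠ 0 := by
      rw [hN]
      apply Finset.prod_ne_zero_iff.mpr
      intro p hp
      have hp' : p.Prime := ((hfin.mem_toFinset).mp hp).1
      exact_mod_cast hp'.ne_zero
    have hcN : c * N ≠ 0 := mul_ne_zero hc0 hN0
    -- find k with |f.eval (c*N*k)| > |c|
    obtain ⟨k, hk⟩ : ∃ k : ℤ, |c| < |f.eval (c * N * k)| := by
      have hbad : {x : ℤ | |f.eval x| ≤ |c|}.Finite := by
        refine Set.Finite.subset (Set.Finite.biUnion (Finset.finite_toSet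
          (Finset.Icc (-|c|) |c|)) (fun v _ => Polynomial.finite_setOf_isRoot (p := f - C v) ?_)) ?_
        · intro h0
          have : f = C v := by linear_combination (norm := ring_nf) h0
          rw [this] at hf
          simp at hf
        · intro x hx
          simp only [Set.mem_setOf_eq] at hx
          have h1 : f.eval x ∈ Finset.Icc (-|c|) |c| := by
            simp only [Finset.mem_Icc]
            exact ⟨neg_le_of_abs_le hx, le_of_abs_le hx⟩
          simp only [Set.mem_iUnion, exists_prop]
          exact ⟨f.eval x, h1, by simp [Polynomial.IsRoot]⟩
      have hinf : (Set.range fun k : ℤ => c * N * k).Infinite := by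
        apply Set.infinite_range_of_injective
        intro a b hab
        exact mul_left_cancel₀ hcN hab
      obtain ⟨x, hx1, hx2⟩ := (hinf.diff hbad).nonempty
      obtain ⟨k, rfl⟩ := hx1
      exact ⟨k, by simpa using not_le.mp (fun h => hx2 h)⟩
    set v : ℤ := f.eval (c * N * k) with hv
    have hdvd : c * N * k ∣ v - c := by
      simpa [← hc] using Polynomial.sub_dvd_eval_sub (c * N * k) 0 f
    obtain ⟨m, hm⟩ := hdvd
    set w : ℤ := 1 + N * k * m with hw
    have hvw : v = c * w := by rw [hw]; linear_combination hm
    have hw1 : 1 < |w| := by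
      have : |v| = |c| * |w| := by rw [hvw, abs_mul]
      nlinarith [abs_nonneg w, abs_nonneg c, abs_pos.mpr hc0]
    obtain ⟨P, hPp, hPw⟩ := Int.exists_prime_and_dvd (n := w) (by
      intro h1
      rw [Int.natAbs_eq_iff] at h1
      rcases h1 with h1 | h1 <;> rw [h1] at hw1 <;> simp at hw1)
    set p := P.natAbs with hpdef
    have hp : p.Prime := Int.prime_iff_natAbs_prime.mp hPp
    have hpw : (p : ℤ) ∣ w := (Int.natAbs_dvd).mpr hPw
    have hpS : p ∈ S := by
      rw [hfin.mem_toFinset]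
      refine ⟨hp, root_mod_of_dvd (n := c * N * k) ?_⟩
      rw [← hv, hvw]
      exact Dvd.dvd.mul_left hpw c
    have hpN : (p : ℤ) ∣ N := Finset.dvd_prod_of_mem _ hpS
    have hp1 : (p : ℤ) ∣ 1 := by
      have : (1 : ℤ) = w - N * (k * m) := by rw [hw]; ring
      rw [this]
      exact dvd_sub hpw (hpN.mul_right _)
    have := Int.le_of_dvd one_pos hp1
    have := hp.one_lt
    omega

private lemma exists_common_denom {K A : Type*} [CommRing K] [CommRing A] (π : A →+* K)
    (r : Multiset K) (h : ∀ α ∈ r, ∃ d : ℤ, d ≠ 0 ∧ ∃ b : A, π b = (d : K) * α) :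
    ∃ D : ℤ, D ≠ 0 ∧ ∀ α ∈ r, ∃ b : A, π b = (D : K) * α := by
  induction r using Multiset.induction with
  | empty => exact ⟨1, one_ne_zero, by simp⟩
  | cons a s ih =>
    obtain ⟨D, hD0, hD⟩ := ih (fun α hα => h α (Multiset.mem_cons_of_mem hα))
    obtain ⟨d, hd0, b, hb⟩ := h a (Multiset.mem_cons_self a s)
    refine ⟨d * D, mul_ne_zero hd0 hD0, ?_⟩
    intro α hα
    rcases Multiset.mem_cons.mp hα with rfl | hα
    · refine ⟨(D : A) * b, ?_⟩
      rw [map_mul, map_intCast, hb]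
      push_cast
      ring
    · obtain ⟨b', hb'⟩ := hD α hα
      refine ⟨(d : A) * b', ?_⟩
      rw [map_mul, map_intCast, hb']
      push_cast
      ring

/-- A monic integer polynomial splits into linear factors modulo infinitely many primes. -/
theorem monic_int_poly_splits_mod_infinitely_many_primes
    (q : Polynomial ℤ) (hq : q.Monic) :
    {p : ℕ | p.Prime ∧
      ∃ s : Multiset (ZMod p),
        q.map (Int.castRingHom (ZMod p)) = (s.map (fun a => X - C a)).prod}.Infinite := by
  classical
  set q' : ℚ[X] := q.map (Int.castRingHom ℚ) with hq'
  set K := q'.SplittingField with hK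
  obtain ⟨θ', hθ'⟩ := Field.exists_primitive_element ℚ K
  have hθ'alg : IsAlgebraic ℤ θ' := by
    rw [IsFractionRing.isAlgebraic_iff ℤ ℚ K]
    exact (IsIntegral.of_finite ℚ θ').isAlgebraic
  obtain ⟨x, d, hd0, hdx⟩ : ∃ x : integralClosure ℤ K, ∃ d ≠ (0 : ℤ), algebraMap ℤ K d * θ' = x := by
    obtain ⟨y, hy0, hy⟩ := hθ'alg.exists_integral_multiple
    exact ⟨⟨y • θ', hy⟩, y, hy0, by simp [Algebra.smul_def]⟩
  set θ : K := (x : K) with hθ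
  have hθint : IsIntegral ℤ θ := x.2
  have htop : ℚ⟮θ⟯ = ⊤ := by
    rw [← top_le_iff, ← hθ']
    rw [IntermediateField.adjoin_simple_le_iff]
    have hd : algebraMap ℚ K (d : ℚ) ≠ 0 := by
      intro h0
      have h1 := (algebraMap ℚ K).injective (h0.trans (map_zero _).symm)
      exact hd0 (by exact_mod_cast h1)
    have halg : algebraMap ℤ K d = algebraMap ℚ K (d : ℚ) := by
      rw [eq_intCast, map_intCast]
    have h1 : θ' = (algebraMap ℚ K (d : ℚ))⁻¹ * θ := by
      rw [← hdx, halg, inv_mul_cancel_left₀ hd]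
    rw [h1]
    apply mul_mem
    · apply inv_mem
      exact IntermediateField.algebraMap_mem _ _
    · exact IntermediateField.mem_adjoin_simple_self ℚ θ
  set f := minpoly ℤ θ with hfdef
  have hfdeg : 0 < f.natDegree := minpoly.natDegree_pos hθint
  set A := AdjoinRoot f with hA
  have hfθ : Polynomial.eval₂ (Int.castRingHom K) θ f = 0 := by
    have := minpoly.aeval ℤ θ
    rw [Polynomial.aeval_def] at this
    exact (congrArg (fun φ : ℤ →+* K => eval₂ φ θ f) (Subsingleton.elim _ _)).trans this
  set π : A →+* K := AdjoinRoot.lift (Int.castRingHom K) θ hfθ with hπ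
  have hπinj : Function.Injective π := by
    rw [injective_iff_map_eq_zero]
    intro a ha
    obtain ⟨g, rfl⟩ := AdjoinRoot.mk_surjective a
    rw [hπ, AdjoinRoot.lift_mk] at ha
    have h1 : Polynomial.aeval θ g = 0 := by
      rw [Polynomial.aeval_def]
      exact (congrArg (fun φ : ℤ →+* K => eval₂ φ θ g) (Subsingleton.elim _ _)).trans ha
    have h2 : f ∣ g := minpoly.isIntegrallyClosed_dvd hθint h1
    rwa [AdjoinRoot.mk_eq_zero]
  set r := (q.map (Int.castRingHom K)).roots with hr
  have hsplitK : Polynomial.Splits (q.map (Int.castRingHom K)) := by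
    have heq : q.map (Int.castRingHom K) = q'.map (algebraMap ℚ K) := by
      show q.map (Int.castRingHom K) = (q.map (Int.castRingHom ℚ)).map (algebraMap ℚ K)
      rw [Polynomial.map_map]
      exact congrArg (fun φ : ℤ →+* K => Polynomial.map φ q) (Subsingleton.elim _ _)
    rw [heq]
    exact Polynomial.SplittingField.splits q'
  have hsplit : q.map (Int.castRingHom K) = (r.map fun α => X - C α).prod :=
    hsplitK.eq_prod_roots_of_monic (hq.map _)
  have hroots : ∀ α ∈ r, ∃ d : ℤ, d ≠ 0 ∧ ∃ b : A, π b = (d : K) * α := by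
    intro α hα
    have hθQ : IsIntegral ℚ θ := IsIntegral.of_finite ℚ θ
    have hmem : α ∈ Algebra.adjoin ℚ {θ} := by
      rw [← IntermediateField.adjoin_simple_toSubalgebra_of_isAlgebraic hθQ.isAlgebraic]
      have : α ∈ (⊤ : IntermediateField ℚ K) := trivial
      rw [← htop] at this
      exact this
    rw [Algebra.adjoin_singleton_eq_range_aeval, AlgHom.mem_range] at hmem
    obtain ⟨h, hh⟩ := hmem
    obtain ⟨b, hb⟩ := IsLocalization.integerNormalization_map_to_map (nonZeroDivisors ℤ) h
    refine ⟨(b : ℤ), nonZeroDivisors.coe_ne_zero b, AdjoinRoot.mk f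
      (IsLocalization.integerNormalization (nonZeroDivisors ℤ) h), ?_⟩
    rw [hπ, AdjoinRoot.lift_mk]
    have h3 : Polynomial.aeval θ (IsLocalization.integerNormalization (nonZeroDivisors ℤ) h)
        = ((b : ℤ) : K) * α := by
      rw [← Polynomial.aeval_map_algebraMap ℚ, hb, zsmul_eq_mul, map_mul, map_intCast, hh]
    rw [← h3, Polynomial.aeval_def]
    exact congrArg (fun φ : ℤ →+* K => eval₂ φ θ _) (Subsingleton.elim _ _)
  obtain ⟨D, hD0, hD⟩ := exists_common_denom π r hroots
  set B : K → A := fun α => if h : ∃ b : A, π b = (D : K) * α then h.choose else 0 with hBdef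
  have hB : ∀ α ∈ r, π (B α) = (D : K) * α := by
    intro α hα
    rw [hBdef]
    simp only
    rw [dif_pos (hD α hα)]
    exact (hD α hα).choose_spec
  have hDK : ((D : ℤ) : K) ≠ 0 := Int.cast_ne_zero.mpr hD0
  have IdA : (q.scaleRoots D).map (Int.castRingHom A) = (r.map fun α => X - C (B α)).prod := by
    apply Polynomial.map_injective π hπinj
    rw [Polynomial.map_map]
    rw [show π.comp (Int.castRingHom A) = Int.castRingHom K from Subsingleton.elim _ _]
    rw [Polynomial.map_scaleRoots q D (Int.castRingHom K)
      (by rw [hq.leadingCoeff]; simp)]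
    rw [hsplit, eq_intCast, scaleRoots_multiset_prod hDK]
    rw [Polynomial.map_multiset_prod, Multiset.map_map]
    apply congrArg
    apply Multiset.map_congr rfl
    intro α hα
    simp [Polynomial.map_sub, hB α hα]
  have hbadfin : {p : ℕ | (p : ℤ) ∣ D}.Finite := by
    apply Set.Finite.subset (Set.finite_Iic D.natAbs)
    intro p hp
    simp only [Set.mem_setOf_eq] at hp
    have : p ∣ D.natAbs := by simpa using Int.natAbs_dvd_natAbs.mpr hp
    exact Nat.le_of_dvd (Int.natAbs_pos.mpr hD0) this
  refine ((schur f hfdeg).diff hbadfin).mono ?_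
  rintro p ⟨⟨hp, t, ht⟩, hpD⟩
  simp only [Set.mem_setOf_eq] at hpD
  haveI : Fact p.Prime := ⟨hp⟩
  refine ⟨hp, ?_⟩
  have ht' : Polynomial.eval₂ (Int.castRingHom (ZMod p)) t f = 0 := by
    rwa [Polynomial.eval_map] at ht
  set ψ : A →+* ZMod p := AdjoinRoot.lift (Int.castRingHom (ZMod p)) t ht' with hψ
  have hu : ((D : ℤ) : ZMod p) ≠ 0 := by
    rw [Ne, ZMod.intCast_zmod_eq_zero_iff_dvd]
    exact hpD
  have hmapeq := congrArg (Polynomial.map ψ) IdA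
  rw [Polynomial.map_map,
    show ψ.comp (Int.castRingHom A) = Int.castRingHom (ZMod p) from Subsingleton.elim _ _,
    Polynomial.map_scaleRoots q D (Int.castRingHom (ZMod p))
      (by rw [hq.leadingCoeff]; simp),
    Polynomial.map_multiset_prod, Multiset.map_map, eq_intCast] at hmapeq
  have hmapeq2 : (q.map (Int.castRingHom (ZMod p))).scaleRoots ((D : ℤ) : ZMod p)
      = ((r.map fun α => ψ (B α)).map fun a => X - C a).prod := by
    rw [hmapeq, Multiset.map_map]
    apply congrArg
    apply Multiset.map_congr rfl
    intro α _
    simp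
  have hfinal := eq_prod_of_scaleRoots hu hmapeq2
  exact ⟨(r.map fun α => ψ (B α)).map (fun a => (((D : ℤ) : ZMod p))⁻¹ * a), hfinal⟩
end
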